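/- Let M ≥ 1, λ ∈ Λ_{Q,M}, and define the type III honeycomb C-functions Ch^{+,III}_λ = Φ_λ + e^{2πi/3}·Φ_{γ1λ} + e^{−2πi/3}·Φ_{γ2λ} and Ch^{−,III}_λ = Φ_λ + e^{−2πi/3}·Φ_{γ1λ} + e^{2πi/3}·Φ_{γ2λ}. Then for every s = (s0,s1,s2) ∈ F_{P,M}: if s1+2s2 ≡ 1 (mod 3) then Ch^{+,III}_λ(s) = 3·Φ_λ(s) and Ch^{−,III}_λ(s) = 0; if s1+2s2 ≡ 2 (mod 3) then Ch^{+,III}_λ(s) = 0 and Ch^{−,III}_λ(s) = 3·Φ_λ(s); and if s1+2s2 ≡ 0 (mod 3) then Ch^{+,III}_λ(s) = Ch^{−,III}_λ(s) = 0. -/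

import Mathlib

open Finset

/-- The point set `F_{P,M}`: triples of nonnegative integers summing to `M`. -/
def FPM (M : ℕ) : Finset (ℕ × ℕ × ℕ) :=
  (Finset.range (M+1) ×ˢ Finset.range (M+1) ×ˢ Finset.range (M+1)).filter
    (fun s => s.1 + s.2.1 + s.2.2 = M)

/-- The point set `F_{Q,M}`: triples of `F_{P,M}` with `s1 + 2 s2 ≡ 0 (mod 3)`. -/
def FQM (M : ℕ) : Finset (ℕ × ℕ × ℕ) :=
  (FPM M).filter (fun s => (s.2.1 + 2 * s.2.2) % 3 = 0)

/-- The honeycomb point set `H_M = F_{P,M} \ F_{Q,M}`. -/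
def HM (M : ℕ) : Finset (ℕ × ℕ × ℕ) := FPM M \ FQM M

/-- The interior point set `F̃_{P,M}`: triples of strictly positive integers summing to `M`. -/
def FPMint (M : ℕ) : Finset (ℕ × ℕ × ℕ) :=
  (FPM M).filter (fun s => 0 < s.1 ∧ 0 < s.2.1 ∧ 0 < s.2.2)

/-- The interior point set `F̃_{Q,M}`. -/
def FQMint (M : ℕ) : Finset (ℕ × ℕ × ℕ) :=
  (FPMint M).filter (fun s => (s.2.1 + 2 * s.2.2) % 3 = 0)

/-- The interior honeycomb point set `H̃_M = F̃_{P,M} \ F̃_{Q,M}`. -/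
def HMint (M : ℕ) : Finset (ℕ × ℕ × ℕ) := FPMint M \ FQMint M

/-- The weight set `L_M ⊆ Λ_{Q,M}`. -/
def LM (M : ℕ) : Finset (ℕ × ℕ × ℕ) :=
  (FPM M).filter (fun l => (l.2.1 < l.1 ∧ l.2.2 < l.1) ∨ (l.1 = l.2.1 ∧ l.2.2 < l.1))

/-- The interior weight set `L̃_M`: elements of `L_M` with all coordinates positive. -/
def LMint (M : ℕ) : Finset (ℕ × ℕ × ℕ) :=
  (LM M).filter (fun l => 0 < l.1 ∧ 0 < l.2.1 ∧ 0 < l.2.2)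

/-- A triple `s ∈ F_{P,M}` is identified with the point `(s1/M, s2/M)`. -/
noncomputable def pt (M : ℕ) (s : ℕ × ℕ × ℕ) : ℝ × ℝ :=
  ((s.2.1 : ℝ) / M, (s.2.2 : ℝ) / M)

/-- The Weyl group orbit of the weight `λ` (ordered list, in `ω`-coordinates). -/
def orbit (l : ℕ × ℕ × ℕ) : List (ℤ × ℤ) :=
  [(2*(l.2.1:ℤ)+l.2.2, (l.2.1:ℤ)+2*l.2.2),
   (-(l.2.1:ℤ)+l.2.2, (l.2.1:ℤ)+2*l.2.2),
   (-(l.2.1:ℤ)-2*l.2.2, (l.2.1:ℤ)-l.2.2),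
   (-(l.2.1:ℤ)-2*l.2.2, -2*(l.2.1:ℤ)-l.2.2),
   (-(l.2.1:ℤ)+l.2.2, -2*(l.2.1:ℤ)-l.2.2),
   (2*(l.2.1:ℤ)+l.2.2, (l.2.1:ℤ)-l.2.2)]

/-- The signs `(+,−,+,−,+,−)` attached to the six orbit points for `S`-functions. -/
def orbitSigns : List ℤ := [1, -1, 1, -1, 1, -1]

/-- The Weyl orbit `C`-function `Φ_λ` of `A₂`. -/
noncomputable def PhiC (l : ℕ × ℕ × ℕ) (x : ℝ × ℝ) : ℂ :=
  ((orbit l).map (fun p =>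
    Complex.exp (2 * Real.pi * Complex.I / 3 * ((p.1 : ℂ) * (x.1 : ℂ) + (p.2 : ℂ) * (x.2 : ℂ))))).sum

/-- The Weyl orbit `S`-function `φ_λ` of `A₂`. -/
noncomputable def PhiS (l : ℕ × ℕ × ℕ) (x : ℝ × ℝ) : ℂ :=
  ((orbitSigns.zip (orbit l)).map (fun p => (p.1 : ℂ) *
    Complex.exp (2 * Real.pi * Complex.I / 3 * ((p.2.1 : ℂ) * (x.1 : ℂ) + (p.2.2 : ℂ) * (x.2 : ℂ))))).sum

/-- The Hartley kernel `cas t = cos t + sin t`. -/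
noncomputable def cas (t : ℝ) : ℝ := Real.cos t + Real.sin t

/-- The Hartley `C`-function `ζ¹_λ` of `A₂`. -/
noncomputable def zetaC (l : ℕ × ℕ × ℕ) (x : ℝ × ℝ) : ℝ :=
  ((orbit l).map (fun p => cas (2 * Real.pi / 3 * ((p.1 : ℝ) * x.1 + (p.2 : ℝ) * x.2)))).sum

/-- The Hartley `S`-function `ζ^e_λ` of `A₂`. -/
noncomputable def zetaS (l : ℕ × ℕ × ℕ) (x : ℝ × ℝ) : ℝ :=
  ((orbitSigns.zip (orbit l)).map (fun p => (p.1 : ℝ) *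
    cas (2 * Real.pi / 3 * ((p.2.1 : ℝ) * x.1 + (p.2.2 : ℝ) * x.2)))).sum

/-- The number of zero entries of a triple. -/
def zeroCount (s : ℕ × ℕ × ℕ) : ℕ :=
  (if s.1 = 0 then 1 else 0) + (if s.2.1 = 0 then 1 else 0) + (if s.2.2 = 0 then 1 else 0)

/-- The discrete function `ε`: values `6, 3, 1` for zero, one, two zero entries. -/
def epsF (s : ℕ × ℕ × ℕ) : ℕ :=
  if zeroCount s = 0 then 6 else if zeroCount s = 1 then 3 else 1

/-- The discrete function `h_M`: values `1, 2, 6` for zero, one, two zero entries. -/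
def hMF (l : ℕ × ℕ × ℕ) : ℕ :=
  if zeroCount l = 0 then 1 else if zeroCount l = 1 then 2 else 6

/-- The elements `γ₀ = id`, `γ₁`, `γ₂` of `Γ_M` acting as cyclic permutations of Kac
coordinates: `γ₁[λ0,λ1,λ2] = [λ2,λ0,λ1]`, `γ₂[λ0,λ1,λ2] = [λ1,λ2,λ0]`. -/
def gam (k : Fin 3) (l : ℕ × ℕ × ℕ) : ℕ × ℕ × ℕ :=
  if k = 0 then l else if k = 1 then (l.2.2, l.1, l.2.1) else (l.2.1, l.2.2, l.1)

/-- The normalization function `μ` of a triple of extension coefficients. -/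
noncomputable def muNorm (a b c : ℂ) : ℝ :=
  ‖a‖ ^ 2 + ‖b‖ ^ 2 + ‖c‖ ^ 2
    - (a * starRingEnd ℂ b + a * starRingEnd ℂ c + b * starRingEnd ℂ c).re

/-- The intertwining function `β` of two triples of extension coefficients. -/
noncomputable def betaFun (a b c a' b' c' : ℂ) : ℂ :=
  2 * (a * starRingEnd ℂ a' + b * starRingEnd ℂ b' + c * starRingEnd ℂ c')
    - a * (starRingEnd ℂ b' + starRingEnd ℂ c')
    - b * (starRingEnd ℂ a' + starRingEnd ℂ c')
    - c * (starRingEnd ℂ a' + starRingEnd ℂ b')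

/-- The extended `C`-function `Φ^t_λ` with extension coefficients `μ0, μ1, μ2`. -/
noncomputable def PhiCExt (μ0 μ1 μ2 : ℂ) (l : ℕ × ℕ × ℕ) (x : ℝ × ℝ) : ℂ :=
  μ0 * PhiC l x + μ1 * PhiC (gam 1 l) x + μ2 * PhiC (gam 2 l) x

/-- The extended `S`-function `φ^t_λ` with extension coefficients `μ0, μ1, μ2`. -/
noncomputable def PhiSExt (μ0 μ1 μ2 : ℂ) (l : ℕ × ℕ × ℕ) (x : ℝ × ℝ) : ℂ :=
  μ0 * PhiS l x + μ1 * PhiS (gam 1 l) x + μ2 * PhiS (gam 2 l) x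

/-- The extended Hartley `C`-function `ζ^{1,t}_λ` with extension coefficients `μ0, μ1, μ2`. -/
noncomputable def zetaCExt (μ0 μ1 μ2 : ℂ) (l : ℕ × ℕ × ℕ) (x : ℝ × ℝ) : ℂ :=
  μ0 * (zetaC l x : ℂ) + μ1 * (zetaC (gam 1 l) x : ℂ) + μ2 * (zetaC (gam 2 l) x : ℂ)

/-- The extended Hartley `S`-function `ζ^{e,t}_λ` with extension coefficients `μ0, μ1, μ2`. -/
noncomputable def zetaSExt (μ0 μ1 μ2 : ℂ) (l : ℕ × ℕ × ℕ) (x : ℝ × ℝ) : ℂ :=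
  μ0 * (zetaS l x : ℂ) + μ1 * (zetaS (gam 1 l) x : ℂ) + μ2 * (zetaS (gam 2 l) x : ℂ)


noncomputable def cc : ℂ := 2 * Real.pi * Complex.I / 3
noncomputable def ww : ℂ := Complex.exp cc

lemma ww_prim : IsPrimitiveRoot ww 3 := by
  have := Complex.isPrimitiveRoot_exp 3 (by norm_num)
  convert this using 2
  simp [ww, cc]

lemma ww_cube : ww ^ 3 = 1 := ww_prim.pow_eq_one

lemma ww_sum : 1 + ww + ww ^ 2 = 0 := by
  have h := ww_prim.geom_sum_eq_zero (by norm_num)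
  simpa [Finset.sum_range_succ] using h

lemma ww_ne : ww ≠ 0 := Complex.exp_ne_zero _

lemma exp_int (m : ℤ) : Complex.exp (cc * m) = ww ^ m := by
  rw [mul_comm, Complex.exp_int_mul]; rfl

lemma ww_zpow_mod (m : ℤ) : ww ^ m = ww ^ (m % 3) := by
  conv_lhs => rw [show m = 3 * (m / 3) + m % 3 by omega]
  rw [zpow_add₀ ww_ne, zpow_mul]
  norm_num [zpow_ofNat, ww_cube]

lemma ww_zpow_congr (m t : ℤ) (h : m % 3 = t % 3) : ww ^ m = ww ^ t := by
  rw [ww_zpow_mod, h, ← ww_zpow_mod]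

/-- auxiliary exponential. -/
noncomputable def EE (M : ℕ) (s : ℕ × ℕ × ℕ) (a b : ℤ) : ℂ :=
  Complex.exp (cc * (((a * s.2.1 + b * s.2.2 : ℤ) : ℂ) / (M : ℂ)))

lemma PhiC_eval (M : ℕ) (hM : M ≠ 0) (l s : ℕ × ℕ × ℕ) :
    PhiC l (pt M s) = EE M s (2*l.2.1+l.2.2) (l.2.1+2*l.2.2)
      + EE M s (-l.2.1+l.2.2) (l.2.1+2*l.2.2)
      + EE M s (-l.2.1-2*l.2.2) (l.2.1-l.2.2)
      + EE M s (-l.2.1-2*l.2.2) (-2*l.2.1-l.2.2)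
      + EE M s (-l.2.1+l.2.2) (-2*l.2.1-l.2.2)
      + EE M s (2*l.2.1+l.2.2) (l.2.1-l.2.2) := by
  have hM' : (M:ℂ) ≠ 0 := by exact_mod_cast hM
  simp only [PhiC, orbit, pt, List.map_cons, List.map_nil, List.sum_cons, List.sum_nil, EE, cc,
    add_zero]
  push_cast
  field_simp
  ring_nf

lemma EE_shift (M : ℕ) (hM : M ≠ 0) (s : ℕ × ℕ × ℕ) (a b k j : ℤ) :
    EE M s (a + k*M) (b + j*M) = ww ^ (k * s.2.1 + j * s.2.2) * EE M s a b := by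
  have hM' : (M:ℂ) ≠ 0 := by exact_mod_cast hM
  rw [EE, EE, show cc * ((((a + k*M) * s.2.1 + (b + j*M) * s.2.2 : ℤ) : ℂ) / (M : ℂ))
      = cc * ((k * s.2.1 + j * s.2.2 : ℤ) : ℂ)
        + cc * (((a * s.2.1 + b * s.2.2 : ℤ) : ℂ) / (M : ℂ)) from by
    push_cast; field_simp; ring, Complex.exp_add, exp_int]

lemma PhiC_gam1 (M : ℕ) (hM : M ≠ 0) (lam : ℕ × ℕ × ℕ)
    (h : lam.1 + lam.2.1 + lam.2.2 = M) (s : ℕ × ℕ × ℕ) :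
    PhiC (gam 1 lam) (pt M s) = ww ^ ((2 * (s.2.1 + 2 * s.2.2) : ℕ) : ℤ) * PhiC lam (pt M s) := by
  have h21 : (gam 1 lam).2.1 = lam.1 := rfl
  have h22 : (gam 1 lam).2.2 = lam.2.1 := rfl
  rw [PhiC_eval M hM _ s, PhiC_eval M hM lam s, h21, h22]
  have e1 : (2*(lam.1:ℤ)+lam.2.1) = (-lam.2.1-2*lam.2.2) + 2*M := by push_cast; omega
  have e2 : ((lam.1:ℤ)+2*lam.2.1) = ((lam.2.1:ℤ)-lam.2.2) + 1*M := by push_cast; omega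
  have e3 : (-(lam.1:ℤ)+lam.2.1) = (2*(lam.2.1:ℤ)+lam.2.2) + (-1)*M := by push_cast; omega
  have e4 : (-(lam.1:ℤ)-2*lam.2.1) = (-(lam.2.1:ℤ)+lam.2.2) + (-1)*M := by push_cast; omega
  have e5 : ((lam.1:ℤ)-lam.2.1) = (-2*(lam.2.1:ℤ)-lam.2.2) + 1*M := by push_cast; omega
  have e6 : (-2*(lam.1:ℤ)-lam.2.1) = ((lam.2.1:ℤ)+2*lam.2.2) + (-2)*M := by push_cast; omega
  rw [e1, e2, e3, e4, e5, e6, EE_shift M hM, EE_shift M hM, EE_shift M hM, EE_shift M hM,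
    EE_shift M hM, EE_shift M hM,
    ww_zpow_congr (2 * s.2.1 + 1 * s.2.2) ((2 * (s.2.1 + 2 * s.2.2) : ℕ) : ℤ) (by push_cast; omega),
    ww_zpow_congr ((-1) * s.2.1 + 1 * s.2.2) ((2 * (s.2.1 + 2 * s.2.2) : ℕ) : ℤ) (by push_cast; omega),
    ww_zpow_congr ((-1) * s.2.1 + (-2) * s.2.2) ((2 * (s.2.1 + 2 * s.2.2) : ℕ) : ℤ) (by push_cast; omega)]
  ring

lemma PhiC_gam2 (M : ℕ) (hM : M ≠ 0) (lam : ℕ × ℕ × ℕ)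
    (h : lam.1 + lam.2.1 + lam.2.2 = M) (s : ℕ × ℕ × ℕ) :
    PhiC (gam 2 lam) (pt M s) = ww ^ ((s.2.1 + 2 * s.2.2 : ℕ) : ℤ) * PhiC lam (pt M s) := by
  have h21 : (gam 2 lam).2.1 = lam.2.2 := rfl
  have h22 : (gam 2 lam).2.2 = lam.1 := rfl
  rw [PhiC_eval M hM _ s, PhiC_eval M hM lam s, h21, h22]
  have e1 : (2*(lam.2.2:ℤ)+lam.1) = (-lam.2.1+lam.2.2) + 1*M := by push_cast; omega
  have e2 : ((lam.2.2:ℤ)+2*lam.1) = (-2*(lam.2.1:ℤ)-lam.2.2) + 2*M := by push_cast; omega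
  have e3 : (-(lam.2.2:ℤ)+lam.1) = (-(lam.2.1:ℤ)-2*lam.2.2) + 1*M := by push_cast; omega
  have e4 : (-(lam.2.2:ℤ)-2*lam.1) = (2*(lam.2.1:ℤ)+lam.2.2) + (-2)*M := by push_cast; omega
  have e5 : ((lam.2.2:ℤ)-lam.1) = ((lam.2.1:ℤ)+2*lam.2.2) + (-1)*M := by push_cast; omega
  have e6 : (-2*(lam.2.2:ℤ)-lam.1) = ((lam.2.1:ℤ)-lam.2.2) + (-1)*M := by push_cast; omega
  rw [e1, e2, e3, e4, e5, e6, EE_shift M hM, EE_shift M hM, EE_shift M hM, EE_shift M hM,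
    EE_shift M hM, EE_shift M hM,
    ww_zpow_congr (1 * s.2.1 + 2 * s.2.2) ((s.2.1 + 2 * s.2.2 : ℕ) : ℤ) (by push_cast; omega),
    ww_zpow_congr ((-2) * s.2.1 + (-1) * s.2.2) ((s.2.1 + 2 * s.2.2 : ℕ) : ℤ) (by push_cast; omega),
    ww_zpow_congr (1 * s.2.1 + (-1) * s.2.2) ((s.2.1 + 2 * s.2.2 : ℕ) : ℤ) (by push_cast; omega)]
  ring

/-- values of the type III honeycomb `C`-functions `Ch^{±,III}_λ` on the
points of `F_{P,M}`, according to the residue of `s1 + 2 s2` mod `3`. -/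
theorem typeIII_honeycomb_C_values (M : ℕ) (hM : 1 ≤ M)
    (lam : ℕ × ℕ × ℕ) (hl : lam ∈ FPM M) (s : ℕ × ℕ × ℕ) (hs : s ∈ FPM M) :
    let w : ℂ := Complex.exp (2 * Real.pi * Complex.I / 3)
    let winv : ℂ := Complex.exp (-(2 * Real.pi * Complex.I / 3))
    let ChP : ℂ := PhiC lam (pt M s) + w * PhiC (gam 1 lam) (pt M s) + winv * PhiC (gam 2 lam) (pt M s)
    let ChM : ℂ := PhiC lam (pt M s) + winv * PhiC (gam 1 lam) (pt M s) + w * PhiC (gam 2 lam) (pt M s)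
    ((s.2.1 + 2 * s.2.2) % 3 = 1 → ChP = 3 * PhiC lam (pt M s) ∧ ChM = 0)
    ∧ ((s.2.1 + 2 * s.2.2) % 3 = 2 → ChP = 0 ∧ ChM = 3 * PhiC lam (pt M s))
    ∧ ((s.2.1 + 2 * s.2.2) % 3 = 0 → ChP = 0 ∧ ChM = 0) := by
  intro w winv ChP ChM
  have hM0 : M ≠ 0 := by omega
  simp only [FPM, Finset.mem_filter] at hl
  have hsum : lam.1 + lam.2.1 + lam.2.2 = M := hl.2
  have hw : w = ww := rfl
  have hwinv : winv = ww ^ (2 : ℤ) := by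
    have : winv = ww⁻¹ := by
      show Complex.exp _ = _
      rw [Complex.exp_neg]; rfl
    rw [this, show (ww⁻¹ : ℂ) = ww ^ (-1 : ℤ) by simp,
      ww_zpow_congr (-1) 2 (by norm_num)]
  have h1 := PhiC_gam1 M hM0 lam hsum s
  have h2 := PhiC_gam2 M hM0 lam hsum s
  set N : ℤ := ((s.2.1 + 2 * s.2.2 : ℕ) : ℤ) with hN
  have hexp : ((2 * (s.2.1 + 2 * s.2.2) : ℕ) : ℤ) = 2 * N := by push_cast [hN]; ring
  have e1 : ww ^ ((1:ℤ) + 2 * N) = ww * ww ^ (2 * N) := by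
    rw [zpow_add₀ ww_ne, zpow_one]
  have e2 : ww ^ ((2:ℤ) + N) = ww ^ (2:ℤ) * ww ^ N := zpow_add₀ ww_ne 2 N
  have e3 : ww ^ ((2:ℤ) + 2 * N) = ww ^ (2:ℤ) * ww ^ (2 * N) := zpow_add₀ ww_ne 2 (2*N)
  have e4 : ww ^ ((1:ℤ) + N) = ww * ww ^ N := by rw [zpow_add₀ ww_ne, zpow_one]
  have hchp : ChP = (1 + ww ^ (1 + 2 * N) + ww ^ (2 + N)) * PhiC lam (pt M s) := by
    show PhiC lam (pt M s) + w * PhiC (gam 1 lam) (pt M s)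
        + winv * PhiC (gam 2 lam) (pt M s) = _
    rw [h1, h2, hw, hwinv, hexp, e1, e2]
    ring
  have hchm : ChM = (1 + ww ^ (2 + 2 * N) + ww ^ (1 + N)) * PhiC lam (pt M s) := by
    show PhiC lam (pt M s) + winv * PhiC (gam 1 lam) (pt M s)
        + w * PhiC (gam 2 lam) (pt M s) = _
    rw [h1, h2, hw, hwinv, hexp, e3, e4]
    ring
  have hmod : N % 3 = ((s.2.1 + 2 * s.2.2) % 3 : ℕ) := by push_cast [hN]; omega
  have key : ∀ a b : ℤ, a % 3 = 0 % 3 → b % 3 = 0 % 3 →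
      (1 + ww ^ a + ww ^ b : ℂ) = 3 := by
    intro a b ha hb
    rw [ww_zpow_congr a 0 ha, ww_zpow_congr b 0 hb]
    norm_num
  have key2 : ∀ a b : ℤ, a % 3 = 1 % 3 → b % 3 = 2 % 3 →
      (1 + ww ^ a + ww ^ b : ℂ) = 0 := by
    intro a b ha hb
    rw [ww_zpow_congr a 1 ha, ww_zpow_congr b 2 hb, zpow_one,
      show (ww:ℂ) ^ (2:ℤ) = ww ^ 2 by norm_num [zpow_ofNat]]
    linear_combination ww_sum
  have key3 : ∀ a b : ℤ, a % 3 = 2 % 3 → b % 3 = 1 % 3 →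
      (1 + ww ^ a + ww ^ b : ℂ) = 0 := by
    intro a b ha hb
    rw [ww_zpow_congr a 2 ha, ww_zpow_congr b 1 hb, zpow_one,
      show (ww:ℂ) ^ (2:ℤ) = ww ^ 2 by norm_num [zpow_ofNat]]
    linear_combination ww_sum
  clear_value N
  refine ⟨fun hr => ?_, fun hr => ?_, fun hr => ?_⟩
  · have hm : N % 3 = 1 := by rw [hr] at hmod; exact_mod_cast hmod
    constructor
    · rw [hchp, key (1 + 2*N) (2 + N) (by omega) (by omega)]
    · rw [hchm, key2 (2 + 2*N) (1 + N) (by omega) (by omega), zero_mul]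
  · have hm : N % 3 = 2 := by rw [hr] at hmod; exact_mod_cast hmod
    constructor
    · rw [hchp, key3 (1 + 2*N) (2 + N) (by omega) (by omega), zero_mul]
    · rw [hchm, key (2 + 2*N) (1 + N) (by omega) (by omega)]
  · have hm : N % 3 = 0 := by rw [hr] at hmod; exact_mod_cast hmod
    constructor
    · rw [hchp, key2 (1 + 2*N) (2 + N) (by omega) (by omega), zero_mul]
    · rw [hchm, key3 (2 + 2*N) (1 + N) (by omega) (by omega), zero_mul]
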